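/- A discrete similarity scheme is fully injective: if for some n ≥ 0, x_n, x_n' ∈ X_n and y_∞ ∈ Y^ℕ one has y_∞ ∈ Γ_n(x_n) ∩ Γ_n(x_n'), then x_n = x_n'. -/
import Mathlib


set_option linter.unusedSectionVars false
set_option linter.unusedVariables false

variable {Y : Type}

/-- Iterated embedding φ_{n,m} : X m → X n for m ≤ n. -/
def phiTo (X : ℕ → Type) (φs : ∀ n, X n → X (n + 1)) {m n : ℕ} (h : m ≤ n) (x : X m) : X n :=
  Nat.leRecOn h (fun {k} x => φs k x) x

/-- Iterated projection π_{m,q} : Yᵐ × X q → X (q+m), the head of the word acting outermost. -/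
def piFin (X : ℕ → Type) (πo : ∀ n, Y → X n → X (n + 1)) :
    ∀ (m q : ℕ), (Fin m → Y) → X q → X (q + m)
  | 0, _, _, x => x
  | m + 1, q, y, x => πo (q + m) (y 0) (piFin X πo m q (fun i => y i.succ) x)

/-- Iterated projection π_{m,0} : Yᵐ × X 0 → X m. -/
def piFin0 (X : ℕ → Type) (πo : ∀ n, Y → X n → X (n + 1)) :
    ∀ (m : ℕ), (Fin m → Y) → X 0 → X m
  | 0, _, x => x
  | m + 1, y, x => πo m (y 0) (piFin0 X πo m (fun i => y i.succ) x)

/-- The set Γ_n(x_n) ⊂ Y^ℕ : all infinite addresses y such that for every p ≥ n the point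
φ_{p,n}(x_n) lies in the cell C(y₁,…,y_p) = π_{p,0}({(y₁,…,y_p)} × X 0). -/
def Gamma (X : ℕ → Type) (φs : ∀ n, X n → X (n + 1)) (πo : ∀ n, Y → X n → X (n + 1))
    (n : ℕ) (xn : X n) : Set (ℕ → Y) :=
  { y | ∀ p, ∀ h : n ≤ p, ∃ x0 : X 0, phiTo X φs h xn = piFin0 X πo p (fun i : Fin p => y i.1) x0 }

/-- The relation R on Y^ℕ: related iff equal or both in some Γ_n(x_n). -/
def simRel (X : ℕ → Type) (φs : ∀ n, X n → X (n + 1)) (πo : ∀ n, Y → X n → X (n + 1)) :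
    (ℕ → Y) → (ℕ → Y) → Prop :=
  fun a b => a = b ∨ ∃ n, ∃ xn : X n, a ∈ Gamma X φs πo n xn ∧ b ∈ Gamma X φs πo n xn

variable {X : ℕ → Type}
  [TopologicalSpace Y] [CompactSpace Y] [T2Space Y]
  [∀ n, TopologicalSpace (X n)] [∀ n, CompactSpace (X n)] [∀ n, T2Space (X n)]


theorem cellUnique
    (φs : ∀ n, X n → X (n + 1)) (πo : ∀ n, Y → X n → X (n + 1))
    (hπs : ∀ n, Function.Surjective fun p : Y × X n => πo n p.1 p.2)
    (hcomm : ∀ (n : ℕ) (y : Y) (x : X n), πo (n + 1) y (φs n x) = φs (n + 1) (πo n y x))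
    (hquot : ∀ (n : ℕ) (y y' : Y) (ξ ξ' : X n), πo n y ξ = πo n y' ξ' → (y, ξ) ≠ (y', ξ') →
      ∃ x0 x0' : X 0, ξ = phiTo X φs (Nat.zero_le n) x0 ∧ ξ' = phiTo X φs (Nat.zero_le n) x0' ∧
        πo 0 y x0 = πo 0 y' x0')
    (hdisc : ∀ (y : Y) (x0 x0' : X 0),
      (∃ z : X 0, πo 0 y x0 = φs 0 z) → (∃ z' : X 0, πo 0 y x0' = φs 0 z') →
      πo 0 y x0 = πo 0 y x0') :
    ∀ (m : ℕ) (y : Fin (m + 1) → Y) (a b : X 0),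
      (∃ u, piFin0 X πo (m + 1) y a = φs m u) →
      (∃ v, piFin0 X πo (m + 1) y b = φs m v) →
      piFin0 X πo (m + 1) y a = piFin0 X πo (m + 1) y b := by
  intro m
  induction m with
  | zero =>
    intro y a b hu hv
    exact hdisc (y 0) a b hu hv
  | succ m ih =>
    rintro y a b ⟨u, hu⟩ ⟨v, hv⟩
    have key : ∀ (c : Y) (w : X (m + 1)), (∃ u, πo (m + 1) c w = φs (m + 1) u) →
        ∃ t : X m, w = φs m t := by
      rintro c w ⟨u, hwu⟩
      obtain ⟨⟨yu, ξu⟩, hxi⟩ := hπs m u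
      simp only at hxi
      have heq : πo (m + 1) c w = πo (m + 1) yu (φs m ξu) := by
        rw [hwu, ← hxi, hcomm]
      by_cases hc : (c, w) = (yu, φs m ξu)
      · exact ⟨ξu, congrArg Prod.snd hc⟩
      · obtain ⟨x0, x0', hw, -, -⟩ := hquot (m + 1) c yu w (φs m ξu) heq hc
        refine ⟨phiTo X φs (Nat.zero_le m) x0, ?_⟩
        rw [hw]
        unfold phiTo
        exact Nat.leRecOn_succ (Nat.zero_le m) x0
    have hA : ∃ t, piFin0 X πo (m + 1) (fun i => y i.succ) a = φs m t :=
      key (y 0) _ ⟨u, hu⟩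
    have hB : ∃ t, piFin0 X πo (m + 1) (fun i => y i.succ) b = φs m t :=
      key (y 0) _ ⟨v, hv⟩
    have hAB := ih (fun i => y i.succ) a b hA hB
    show πo (m + 1) (y 0) _ = πo (m + 1) (y 0) _
    rw [hAB]

theorem statement_13
    (φs : ∀ n, X n → X (n + 1)) (πo : ∀ n, Y → X n → X (n + 1))
    (hφc : ∀ n, Continuous (φs n)) (hφi : ∀ n, Function.Injective (φs n))
    (hπc : ∀ n, Continuous fun p : Y × X n => πo n p.1 p.2)
    (hπs : ∀ n, Function.Surjective fun p : Y × X n => πo n p.1 p.2)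
    (hcomm : ∀ (n : ℕ) (y : Y) (x : X n), πo (n + 1) y (φs n x) = φs (n + 1) (πo n y x))
    (hquot : ∀ (n : ℕ) (y y' : Y) (ξ ξ' : X n), πo n y ξ = πo n y' ξ' → (y, ξ) ≠ (y', ξ') →
      ∃ x0 x0' : X 0, ξ = phiTo X φs (Nat.zero_le n) x0 ∧ ξ' = phiTo X φs (Nat.zero_le n) x0' ∧
        πo 0 y x0 = πo 0 y' x0')
    (hdisc : ∀ (y : Y) (x0 x0' : X 0),
      (∃ z : X 0, πo 0 y x0 = φs 0 z) → (∃ z' : X 0, πo 0 y x0' = φs 0 z') →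
      πo 0 y x0 = πo 0 y x0')
    (n : ℕ) (xn xn' : X n) (y : ℕ → Y)
    (h : y ∈ Gamma X φs πo n xn) (h' : y ∈ Gamma X φs πo n xn') :
    xn = xn' := by
  obtain ⟨x0, hx0⟩ := h (n + 1) (Nat.le_succ n)
  obtain ⟨x0', hx0'⟩ := h' (n + 1) (Nat.le_succ n)
  have hφ : ∀ z : X n, phiTo X φs (Nat.le_succ n) z = φs n z := by
    intro z
    unfold phiTo
    rw [Nat.leRecOn_succ (Nat.le_refl n), Nat.leRecOn_self]
  have hc := cellUnique φs πo hπs hcomm hquot hdisc n (fun i : Fin (n + 1) => y i.1) x0 x0'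
    ⟨xn, by rw [← hx0, hφ]⟩ ⟨xn', by rw [← hx0', hφ]⟩
  apply hφi n
  rw [← hφ xn, ← hφ xn', hx0, hx0', hc]
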